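/- arXiv:2310.07430 — 2 statements merged into one kernel-verified Lean document; each statement's English description precedes it below -/
import Mathlib

section
/- Let M be a diagonalizable matrix with orthonormal eigenvectors ν_1, ..., ν_n and real eigenvalues satisfying λ_1 > |λ_2| ≥ ... ≥ |λ_n| ≥ 0. Let x = Σ c_i ν_i with c_1 ≠ 0. Then the normalized power iterates M^k x / ||M^k x|| converge to sign(c_1) ν_1 as k → ∞; moreover for any ε > 0 there exists K such that for all k ≥ K, ||M^k x / ||M^k x|| − sign(c_1) ν_1||_2 < ε. -/
open Finset Filter


/-- Power iteration. Let `M` be a real matrix with orthonormal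
eigenvectors `ν 0, ..., ν (n-1)` and real eigenvalues with `lam 0 > |lam a|` for all
`a ≠ 0`. If `x = ∑ c a • ν a` with `c 0 ≠ 0`, then the normalized iterates
`M^k x / ‖M^k x‖` converge to `sign (c 0) • ν 0`: for every `ε > 0` there is `K` such
that for all `k ≥ K` the Euclidean distance is less than `ε`. -/
theorem power_iteration_convergence (n : ℕ) (hn : 1 < n) [NeZero n]
    (M : Matrix (Fin n) (Fin n) ℝ) (ν : Fin n → Fin n → ℝ) (lam : Fin n → ℝ)
    (horth : ∀ a b : Fin n, (∑ i, ν a i * ν b i) = if a = b then (1 : ℝ) else 0)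
    (heig : ∀ a : Fin n, M.mulVec (ν a) = lam a • ν a)
    (hgap : ∀ a : Fin n, a ≠ 0 → |lam a| < lam 0)
    (c : Fin n → ℝ) (x : Fin n → ℝ) (hx : x = ∑ a, c a • ν a) (hc : c 0 ≠ 0) :
    ∀ ε > 0, ∃ K : ℕ, ∀ k ≥ K,
      Real.sqrt (∑ i,
        ((Real.sqrt (∑ i', ((M ^ k).mulVec x i') ^ 2))⁻¹ • (M ^ k).mulVec x
          - Real.sign (c 0) • ν 0) i ^ 2) < ε := by
  have h1n : (⟨1, hn⟩ : Fin n) ≠ 0 := by simp [Fin.ext_iff]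
  have hlam0 : 0 < lam 0 := lt_of_le_of_lt (abs_nonneg _) (hgap ⟨1, hn⟩ h1n)
  -- expansion of the iterates
  have hMk : ∀ k : ℕ, (M ^ k).mulVec x = ∑ a, (c a * lam a ^ k) • ν a := by
    intro k
    induction k with
    | zero => simpa using hx
    | succ k ih =>
      rw [pow_succ', ← Matrix.mulVec_mulVec, ih]
      have h2 : M.mulVec (∑ a, (c a * lam a ^ k) • ν a)
          = ∑ a, (c a * lam a ^ k) • M.mulVec (ν a) := by
        simp only [← Matrix.mulVecLin_apply, map_sum, map_smul]
      rw [h2]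
      refine Finset.sum_congr rfl fun a _ => ?_
      rw [heig, smul_smul]
      congr 1
      ring
  -- inner product with an eigenvector
  have hinner : ∀ (d : Fin n → ℝ) (b : Fin n),
      (∑ i, (∑ a, d a • ν a) i * ν b i) = d b := by
    intro d b
    have h1 : ∀ i, (∑ a, d a • ν a) i * ν b i = ∑ a, d a * (ν a i * ν b i) := by
      intro i
      simp only [Finset.sum_apply, Pi.smul_apply, smul_eq_mul, Finset.sum_mul, mul_assoc]
    simp only [h1]
    rw [Finset.sum_comm]
    have h2 : ∀ a, (∑ i, d a * (ν a i * ν b i)) = d a * (if a = b then (1:ℝ) else 0) := by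
      intro a
      rw [← Finset.mul_sum, horth]
    simp only [h2]
    simp [Finset.sum_ite_eq]
  -- norm squared
  have hnormsq : ∀ d : Fin n → ℝ,
      (∑ i, ((∑ a, d a • ν a) i) ^ 2) = ∑ a, d a ^ 2 := by
    intro d
    have h1 : ∀ i, ((∑ a, d a • ν a) i) ^ 2
        = ∑ a, d a * ((∑ a', d a' • ν a') i * ν a i) := by
      intro i
      have h0 : ((∑ a, d a • ν a) i) ^ 2
          = (∑ a, d a • ν a) i * (∑ a, d a * ν a i) := by
        simp [sq, Finset.sum_apply]
      rw [h0, Finset.mul_sum]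
      refine Finset.sum_congr rfl fun a _ => ?_
      ring
    simp only [h1]
    rw [Finset.sum_comm]
    refine Finset.sum_congr rfl fun a _ => ?_
    rw [← Finset.mul_sum, hinner d a]
    ring
  -- sign facts
  set s : ℝ := Real.sign (c 0) with hs
  have hsc : s * c 0 = |c 0| := by
    rcases lt_trichotomy (c 0) 0 with h | h | h
    · rw [hs, Real.sign_of_neg h, abs_of_neg h]; ring
    · exact absurd h hc
    · rw [hs, Real.sign_of_pos h, abs_of_pos h]; ring
  have hss : s ^ 2 = 1 := by
    rcases lt_trichotomy (c 0) 0 with h | h | h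
    · rw [hs, Real.sign_of_neg h]; norm_num
    · exact absurd h hc
    · rw [hs, Real.sign_of_pos h]; norm_num
  -- the squared norms of the iterates
  set S : ℕ → ℝ := fun k => ∑ a, (c a * lam a ^ k) ^ 2 with hSdef
  have hSterm : ∀ k, 0 < (c 0 * lam 0 ^ k) ^ 2 := by
    intro k
    positivity
  have hSpos : ∀ k, 0 < S k := by
    intro k
    refine lt_of_lt_of_le (hSterm k) ?_
    exact Finset.single_le_sum (f := fun a => (c a * lam a ^ k) ^ 2)
      (fun a _ => sq_nonneg _) (Finset.mem_univ 0)
  have hsum_sq : ∀ k, (∑ i', ((M ^ k).mulVec x i') ^ 2) = S k := by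
    intro k
    rw [hMk k, hnormsq]
  -- the key algebraic identity for the distance squared
  have hExpr : ∀ k, (∑ i,
      ((Real.sqrt (∑ i', ((M ^ k).mulVec x i') ^ 2))⁻¹ • (M ^ k).mulVec x
        - s • ν 0) i ^ 2) = 2 - 2 * (|c 0| * lam 0 ^ k / Real.sqrt (S k)) := by
    intro k
    have hr : (0:ℝ) < Real.sqrt (S k) := Real.sqrt_pos.2 (hSpos k)
    set r : ℝ := Real.sqrt (S k) with hrdef
    have hr2 : r ^ 2 = S k := Real.sq_sqrt (hSpos k).le
    have h1 : ∀ i,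
        ((Real.sqrt (∑ i', ((M ^ k).mulVec x i') ^ 2))⁻¹ • (M ^ k).mulVec x
          - s • ν 0) i ^ 2
        = r⁻¹ ^ 2 * ((M ^ k).mulVec x i) ^ 2
          - 2 * r⁻¹ * s * ((M ^ k).mulVec x i * ν 0 i) + s ^ 2 * (ν 0 i) ^ 2 := by
      intro i
      rw [hsum_sq k]
      simp only [Pi.sub_apply, Pi.smul_apply, smul_eq_mul, ← hrdef]
      ring
    rw [Finset.sum_congr rfl fun i _ => h1 i]
    rw [Finset.sum_add_distrib, Finset.sum_sub_distrib, ← Finset.mul_sum,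
      ← Finset.mul_sum, ← Finset.mul_sum]
    have h2 : (∑ i, ((M ^ k).mulVec x i * ν 0 i)) = c 0 * lam 0 ^ k := by
      rw [hMk k]
      exact hinner _ 0
    have h3 : (∑ i, (ν 0 i) ^ 2) = 1 := by
      have := horth 0 0
      simpa [sq] using this
    rw [hsum_sq k, h2, h3, hss]
    have h4 : r⁻¹ ^ 2 * S k = 1 := by
      rw [← hr2]
      field_simp
    rw [h4]
    have h5 : 2 * r⁻¹ * s * (c 0 * lam 0 ^ k) = 2 * (|c 0| * lam 0 ^ k / r) := by
      rw [div_eq_mul_inv]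
      calc 2 * r⁻¹ * s * (c 0 * lam 0 ^ k)
          = 2 * ((s * c 0) * lam 0 ^ k * r⁻¹) := by ring
        _ = 2 * (|c 0| * lam 0 ^ k * r⁻¹) := by rw [hsc]
    rw [h5]
    ring
  -- the ratio tends to 1
  have hfrac : Tendsto (fun k => |c 0| * lam 0 ^ k / Real.sqrt (S k)) atTop (nhds 1) := by
    set g : ℕ → ℝ := fun k => ∑ a, ((c a / c 0) ^ 2 * ((lam a / lam 0) ^ 2) ^ k)
      with hgdef
    have hg : Tendsto g atTop (nhds 1) := by
      have hlim : ∀ a : Fin n, Tendsto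
          (fun k => (c a / c 0) ^ 2 * ((lam a / lam 0) ^ 2) ^ k) atTop
          (nhds (if a = 0 then (1:ℝ) else 0)) := by
        intro a
        by_cases ha : a = 0
        · subst ha
          simp only [if_pos rfl]
          have : ∀ k : ℕ, (c 0 / c 0) ^ 2 * ((lam 0 / lam 0) ^ 2) ^ k = 1 := by
            intro k
            rw [div_self hc, div_self hlam0.ne']
            norm_num
          simp only [this]
          exact tendsto_const_nhds
        · simp only [if_neg ha]
          have h01 : (0:ℝ) ≤ (lam a / lam 0) ^ 2 := sq_nonneg _
          have h11 : (lam a / lam 0) ^ 2 < 1 := by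
            rw [sq_lt_one_iff_abs_lt_one, abs_div, abs_of_pos hlam0]
            exact (div_lt_one hlam0).2 (hgap a ha)
          have := (tendsto_pow_atTop_nhds_zero_of_lt_one h01 h11).const_mul
            ((c a / c 0) ^ 2)
          simpa using this
      have := tendsto_finset_sum Finset.univ (fun a _ => hlim a)
      have hsum1 : (∑ a : Fin n, (if a = 0 then (1:ℝ) else 0)) = 1 := by
        simp [Finset.sum_ite_eq]
      rw [hsum1] at this
      exact this
    have hgeq : ∀ k, g k = S k / (c 0 * lam 0 ^ k) ^ 2 := by
      intro k
      rw [hgdef, hSdef]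
      simp only
      rw [Finset.sum_div]
      refine Finset.sum_congr rfl fun a _ => ?_
      have hl0 : lam 0 ^ k ≠ 0 := (pow_pos hlam0 k).ne'
      field_simp
      rw [← pow_mul, mul_comm k 2, pow_mul, div_pow, mul_assoc,
        div_mul_cancel₀ _ (pow_ne_zero k (pow_ne_zero 2 hlam0.ne'))]
      ring
    have hfe : ∀ k, |c 0| * lam 0 ^ k / Real.sqrt (S k) = (Real.sqrt (g k))⁻¹ := by
      intro k
      rw [hgeq k, Real.sqrt_div (hSpos k).le, Real.sqrt_sq_eq_abs, abs_mul,
        abs_pow, abs_of_pos hlam0, inv_div]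
    simp only [hfe]
    have hsq : Tendsto (fun k => Real.sqrt (g k)) atTop (nhds 1) := by
      have := (Real.continuous_sqrt.tendsto 1).comp hg
      rw [Real.sqrt_one] at this
      exact this
    have := hsq.inv₀ one_ne_zero
    simpa using this
  -- conclude
  have hT : Tendsto (fun k => Real.sqrt (∑ i,
      ((Real.sqrt (∑ i', ((M ^ k).mulVec x i') ^ 2))⁻¹ • (M ^ k).mulVec x
        - s • ν 0) i ^ 2)) atTop (nhds 0) := by
    have h0 : Tendsto (fun k => 2 - 2 * (|c 0| * lam 0 ^ k / Real.sqrt (S k)))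
        atTop (nhds 0) := by
      have := (hfrac.const_mul 2).const_sub 2
      simpa using this
    have h1 := (Real.continuous_sqrt.tendsto 0).comp h0
    rw [Real.sqrt_zero] at h1
    refine h1.congr fun k => ?_
    simp only [Function.comp_apply]
    rw [← hExpr k]
  intro ε hε
  rw [Metric.tendsto_atTop] at hT
  obtain ⟨K, hK⟩ := hT ε hε
  refine ⟨K, fun k hk => ?_⟩
  have := hK k hk
  rw [Real.dist_eq, sub_zero, abs_of_nonneg (Real.sqrt_nonneg _)] at this
  exact this
end

section
/- For a tree G with edge (i,j) and node i of degree d_i ≥ 2, combining the expected number of failures (d_i−1)^2/d_i of the begrudgingly backtracking walk with its per-failure penalty 2|E(G_i)|/(d_i−1) (the BBRW return time of i in G_i) yields total expected penalty 2|E(G_i)|(d_i−1)/d_i, so the BBRW access time t̃(i,j) = 1 + 2|E(G_i)|(d_i−1)/d_i ≤ 1 + 2|E(G_i)| = t(i,j), the SRW access time. -/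
open Finset

/-- Auxiliary: the graph of edges of `G` whose endpoints lie in the `G'`-component of `i`. -/
def bbrwCompG {V : Type*} (G G' : SimpleGraph V) (i : V) : SimpleGraph V where
  Adj a b := G.Adj a b ∧ G'.Reachable i a ∧ G'.Reachable i b
  symm := ⟨fun a b h => ⟨h.1.symm, h.2.2, h.2.1⟩⟩
  loopless := ⟨fun a h => G.loopless.irrefl a h.1⟩

/-- The number of edges of `G'` lying in the connected component of node `i`. -/
noncomputable def compEdgeCount {V : Type*} (G' : SimpleGraph V) (i : V) : ℕ :=
  {e ∈ G'.edgeSet | ∀ v ∈ e, G'.Reachable i v}.ncard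

/-- For a finite tree `G` with edge `(i,j)` and `d_i ≥ 2`, the BBRW access
time from `i` to `j` (average of the transition-conditioned hitting times `nb i l j`
over the uniform first step) equals `1 + 2|E(G_i)|(d_i − 1)/d_i`, hence is at most
`1 + 2|E(G_i)|`, which equals the SRW access time `t i j`. Here `t` satisfies the SRW
first-step recurrence and `nb` the BBRW recurrences. -/
theorem bbrw_vs_srw_adjacent
    {V : Type*} [Fintype V] [DecidableEq V] (G : SimpleGraph V) [DecidableRel G.Adj]
    (hG : G.IsTree) (i j : V) (hij : G.Adj i j) (hdi : 2 ≤ G.degree i)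
    (t : V → V → ℝ)
    (ht0 : ∀ b, t b b = 0)
    (htstep : ∀ a b : V, a ≠ b →
      t a b = 1 + ((G.degree a : ℝ))⁻¹ * ∑ k ∈ G.neighborFinset a, t k b)
    (nb : V → V → V → ℝ)
    (hnb1 : ∀ a b : V, G.Adj a b → nb a b b = 1)
    (hnb2 : ∀ a b k : V, G.Adj a b → b ≠ k → G.degree b = 1 → nb a b k = 1 + nb b a k)
    (hnb3 : ∀ a b k : V, G.Adj a b → b ≠ k → 1 < G.degree b →
      nb a b k = 1 + ((G.degree b : ℝ) - 1)⁻¹ * ∑ l ∈ G.neighborFinset b \ {a}, nb b l k) :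
    (((G.degree i : ℝ))⁻¹ * ∑ l ∈ G.neighborFinset i, nb i l j
        = 1 + 2 * (compEdgeCount (G.deleteEdges {Sym2.mk i j}) i : ℝ)
            * ((G.degree i : ℝ) - 1) / (G.degree i : ℝ)) ∧
    (((G.degree i : ℝ))⁻¹ * ∑ l ∈ G.neighborFinset i, nb i l j
        ≤ 1 + 2 * (compEdgeCount (G.deleteEdges {Sym2.mk i j}) i : ℝ)) ∧
    (t i j = 1 + 2 * (compEdgeCount (G.deleteEdges {Sym2.mk i j}) i : ℝ)) := by
  classical
  set G' := G.deleteEdges {Sym2.mk i j} with hG'def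
  have hbridge : G.IsBridge (Sym2.mk i j) :=
    (SimpleGraph.isAcyclic_iff_forall_edge_isBridge.mp hG.IsAcyclic)
      (by simpa using hij)
  have hj : ¬ G'.Reachable i j := (SimpleGraph.isBridge_iff.mp hbridge)
  set A : Finset V := Finset.univ.filter (fun v => G'.Reachable i v) with hAdef
  have memA : ∀ {v : V}, v ∈ A ↔ G'.Reachable i v := by
    intro v; simp [hAdef]
  have hiA : i ∈ A := memA.mpr (SimpleGraph.Reachable.refl i)
  have hjA : j ∉ A := fun h => hj (memA.mp h)
  have L1 : ∀ a b : V, a ∈ A → G.Adj a b → b ∉ A → a = i ∧ b = j := by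
    intro a b ha hab hb
    by_cases he : Sym2.mk a b = Sym2.mk i j
    · rcases Sym2.eq_iff.mp he with ⟨h1, h2⟩ | ⟨h1, h2⟩
      · exact ⟨h1, h2⟩
      · exact absurd ha (by rw [h1]; exact hjA)
    · exfalso
      apply hb
      have : G'.Adj a b := SimpleGraph.deleteEdges_adj.mpr ⟨hab, by simpa using he⟩
      exact memA.mpr ((memA.mp ha).trans this.reachable)
  have hNsub : ∀ b ∈ A, b ≠ i → G.neighborFinset b ∩ A = G.neighborFinset b := by
    intro b hb hbi
    apply Finset.inter_eq_left.mpr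
    intro k hk
    by_contra hkA
    exact hbi (L1 b k hb ((G.mem_neighborFinset b k).mp hk) hkA).1
  have hNi : G.neighborFinset i ∩ A = (G.neighborFinset i).erase j := by
    ext k
    simp only [Finset.mem_inter, Finset.mem_erase, SimpleGraph.mem_neighborFinset]
    constructor
    · rintro ⟨hk, hkA⟩
      exact ⟨fun h => hjA (h ▸ hkA), hk⟩
    · rintro ⟨hkj, hk⟩
      refine ⟨hk, ?_⟩
      by_contra hkA
      exact hkj (L1 i k hiA hk hkA).2
  -- the component graph
  set K : SimpleGraph V := bbrwCompG G G' i with hKdef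
  have hKadj : ∀ a b : V, K.Adj a b ↔ G.Adj a b ∧ a ∈ A ∧ b ∈ A := by
    intro a b; simp [hKdef, bbrwCompG, memA]
  have hKnf : ∀ a ∈ A, K.neighborFinset a = G.neighborFinset a ∩ A := by
    intro a ha
    ext b
    simp only [SimpleGraph.mem_neighborFinset, Finset.mem_inter, hKadj]
    tauto
  have hKdeg0 : ∀ a : V, a ∉ A → K.degree a = 0 := by
    intro a ha
    rw [← SimpleGraph.card_neighborFinset_eq_degree, Finset.card_eq_zero]
    ext b
    simp only [SimpleGraph.mem_neighborFinset, hKadj, Finset.notMem_empty, iff_false]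
    tauto
  have hedge : K.edgeSet = {e ∈ G'.edgeSet | ∀ v ∈ e, G'.Reachable i v} := by
    ext e
    induction e using Sym2.ind with
    | _ a b =>
      simp only [SimpleGraph.mem_edgeSet, Set.mem_setOf_eq, hKadj, memA]
      constructor
      · rintro ⟨hab, ha, hb⟩
        have hne : Sym2.mk a b ≠ Sym2.mk i j := by
          intro he
          rcases Sym2.eq_iff.mp he with ⟨h1, h2⟩ | ⟨h1, h2⟩
          · exact hj (h2 ▸ hb)
          · exact hj (h1 ▸ ha)
        refine ⟨SimpleGraph.deleteEdges_adj.mpr ⟨hab, by simpa using hne⟩, ?_⟩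
        intro v hv
        rcases Sym2.mem_iff.mp hv with rfl | rfl
        exacts [ha, hb]
      · rintro ⟨hab, hall⟩
        exact ⟨(SimpleGraph.deleteEdges_adj.mp hab).1, hall a (by simp), hall b (by simp)⟩
  have hm : compEdgeCount G' i = K.edgeFinset.card := by
    rw [compEdgeCount, ← hedge, Set.ncard_eq_toFinset_card']
    congr 1
  have hDsum : ∑ a ∈ A, (G.neighborFinset a ∩ A).card = 2 * compEdgeCount G' i := by
    rw [hm, ← SimpleGraph.sum_degrees_eq_twice_card_edges K]
    rw [← Finset.sum_subset (Finset.subset_univ A) (fun x _ hx => hKdeg0 x hx)]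
    refine Finset.sum_congr rfl fun a ha => ?_
    rw [← SimpleGraph.card_neighborFinset_eq_degree, hKnf a ha]
  have hdegsum : ∑ a ∈ A, G.degree a = 2 * compEdgeCount G' i + 1 := by
    have hstep : ∀ a ∈ A, G.degree a = (G.neighborFinset a ∩ A).card + (if a = i then 1 else 0) := by
      intro a ha
      by_cases hai : a = i
      · subst hai
        rw [hNi, if_pos rfl, Finset.card_erase_of_mem ((G.mem_neighborFinset a j).mpr hij),
          ← SimpleGraph.card_neighborFinset_eq_degree]
        have : 1 ≤ (G.neighborFinset a).card := Finset.card_pos.mpr ⟨j, (G.mem_neighborFinset a j).mpr hij⟩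
        omega
      · rw [hNsub a ha hai, if_neg hai, ← SimpleGraph.card_neighborFinset_eq_degree]
        omega
    rw [Finset.sum_congr rfl hstep, Finset.sum_add_distrib, hDsum, Finset.sum_ite_eq' A i (fun _ => 1), if_pos hiA]
  -- generic swap over directed edges inside A
  have hswap : ∀ f : V → V → ℝ,
      ∑ a ∈ A, ∑ b ∈ G.neighborFinset a ∩ A, f a b
        = ∑ b ∈ A, ∑ a ∈ G.neighborFinset b ∩ A, f a b := by
    intro f
    have hfil : ∀ a : V, G.neighborFinset a ∩ A = A.filter (fun b => G.Adj a b) := by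
      intro a
      ext b
      simp [Finset.mem_filter, Finset.mem_inter, SimpleGraph.mem_neighborFinset, and_comm]
    calc ∑ a ∈ A, ∑ b ∈ G.neighborFinset a ∩ A, f a b
        = ∑ a ∈ A, ∑ b ∈ A, if G.Adj a b then f a b else 0 := by
          refine Finset.sum_congr rfl fun a _ => ?_
          rw [hfil a]
          exact Finset.sum_filter _ _
      _ = ∑ b ∈ A, ∑ a ∈ A, if G.Adj a b then f a b else 0 := Finset.sum_comm
      _ = ∑ b ∈ A, ∑ a ∈ A, if G.Adj b a then f a b else 0 := by
          refine Finset.sum_congr rfl fun b _ => Finset.sum_congr rfl fun a _ => ?_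
          exact if_congr (G.adj_comm a b) rfl rfl
      _ = ∑ b ∈ A, ∑ a ∈ G.neighborFinset b ∩ A, f a b := by
          refine Finset.sum_congr rfl fun b _ => ?_
          rw [hfil b]
          exact (Finset.sum_filter _ _).symm
  have hdegA : ∑ a ∈ A, (G.degree a : ℝ) = 2 * (compEdgeCount G' i : ℝ) + 1 := by
    rw [← Nat.cast_sum]
    rw [hdegsum]
    push_cast
    ring
  have hdA : ∑ a ∈ A, ((G.neighborFinset a ∩ A).card : ℝ) = 2 * (compEdgeCount G' i : ℝ) := by
    rw [← Nat.cast_sum, hDsum]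
    push_cast
    ring
  -- SRW part
  have part3 : t i j = 1 + 2 * (compEdgeCount G' i : ℝ) := by
    have h1 : ∀ a ∈ A, (G.degree a : ℝ) * t a j
        = (G.degree a : ℝ) + ∑ k ∈ G.neighborFinset a, t k j := by
      intro a ha
      have haj : a ≠ j := fun h => hjA (h ▸ ha)
      by_cases h0 : G.degree a = 0
      · have hne : G.neighborFinset a = ∅ := by
          rw [← Finset.card_eq_zero, SimpleGraph.card_neighborFinset_eq_degree]; exact h0
        simp [h0, hne]
      · have hd : (G.degree a : ℝ) ≠ 0 := Nat.cast_ne_zero.mpr h0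
        rw [htstep a j haj]
        field_simp
    have h2 : ∀ a ∈ A, ∑ k ∈ G.neighborFinset a, t k j = ∑ k ∈ G.neighborFinset a ∩ A, t k j := by
      intro a ha
      symm
      apply Finset.sum_subset Finset.inter_subset_left
      intro k hk hk2
      have hkA : k ∉ A := fun h => hk2 (Finset.mem_inter.mpr ⟨hk, h⟩)
      rw [(L1 a k ha ((G.mem_neighborFinset a k).mp hk) hkA).2]
      exact ht0 j
    have E1 : ∑ a ∈ A, (G.degree a : ℝ) * t a j
        = (∑ a ∈ A, (G.degree a : ℝ)) + ∑ a ∈ A, ∑ k ∈ G.neighborFinset a ∩ A, t k j := by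
      rw [← Finset.sum_add_distrib]
      refine Finset.sum_congr rfl fun a ha => ?_
      rw [h1 a ha, h2 a ha]
    have E3 : ∑ a ∈ A, ∑ k ∈ G.neighborFinset a ∩ A, t k j
        = ∑ k ∈ A, ∑ a ∈ G.neighborFinset k ∩ A, t k j := hswap (fun a k => t k j)
    have E4 : ∑ k ∈ A, ∑ a ∈ G.neighborFinset k ∩ A, t k j
        = ∑ k ∈ A, (G.degree k : ℝ) * t k j - t i j := by
      have hstep : ∀ k ∈ A, ∑ a ∈ G.neighborFinset k ∩ A, t k j
          = (G.degree k : ℝ) * t k j - (if k = i then t i j else 0) := by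
        intro k hk
        rw [Finset.sum_const, nsmul_eq_mul]
        by_cases hki : k = i
        · subst hki
          rw [hNi, if_pos rfl, Finset.card_erase_of_mem ((G.mem_neighborFinset k j).mpr hij),
            SimpleGraph.card_neighborFinset_eq_degree]
          have h1' : (1 : ℕ) ≤ G.degree k := by omega
          rw [Nat.cast_sub h1']
          push_cast
          ring
        · rw [hNsub k hk hki, if_neg hki, SimpleGraph.card_neighborFinset_eq_degree]
          ring
      rw [Finset.sum_congr rfl hstep, Finset.sum_sub_distrib,
        Finset.sum_ite_eq' A i (fun _ => t i j), if_pos hiA]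
    have : t i j = ∑ a ∈ A, (G.degree a : ℝ) := by
      have := E1
      rw [E3, E4] at this
      linarith
    rw [this, hdegA]
    ring
  -- BBRW part
  have hd2 : (2 : ℝ) ≤ (G.degree i : ℝ) := by exact_mod_cast hdi
  have hdpos : (0 : ℝ) < (G.degree i : ℝ) := by linarith
  have hd0 : (G.degree i : ℝ) ≠ 0 := ne_of_gt hdpos
  have hd1 : (G.degree i : ℝ) - 1 ≠ 0 := by intro h; linarith [h]
  set R : V → V → ℝ := fun a b => if G.degree b = 1 then nb b a j
      else ((G.degree b : ℝ) - 1)⁻¹ * ∑ l ∈ G.neighborFinset b \ {a}, nb b l j with hRdef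
  have stepA : ∀ a b : V, b ∈ A → G.Adj a b → nb a b j = 1 + R a b := by
    intro a b hb hab
    have hbj : b ≠ j := fun h => hjA (h ▸ hb)
    by_cases h1 : G.degree b = 1
    · rw [hRdef]
      simp only [if_pos h1]
      exact hnb2 a b j hab hbj h1
    · have hpos : 0 < G.degree b := by
        rw [← SimpleGraph.card_neighborFinset_eq_degree]
        exact Finset.card_pos.mpr ⟨a, (G.mem_neighborFinset b a).mpr hab.symm⟩
      have hb2 : 1 < G.degree b := lt_of_le_of_ne hpos (Ne.symm h1)
      rw [hRdef]
      simp only [if_neg h1]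
      exact hnb3 a b j hab hbj hb2
  set S : ℝ := ∑ l ∈ (G.neighborFinset i).erase j, nb i l j with hSdef
  set LHS : ℝ := ∑ a ∈ A, ∑ b ∈ G.neighborFinset a ∩ A, nb a b j with hLHSdef
  have EA : LHS = 2 * (compEdgeCount G' i : ℝ) + ∑ a ∈ A, ∑ b ∈ G.neighborFinset a ∩ A, R a b := by
    rw [hLHSdef, ← hdA, ← Finset.sum_add_distrib]
    refine Finset.sum_congr rfl fun a ha => ?_
    have : ∀ b ∈ G.neighborFinset a ∩ A, nb a b j = 1 + R a b := by
      intro b hb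
      rcases Finset.mem_inter.mp hb with ⟨hb1, hb2⟩
      exact stepA a b hb2 ((G.mem_neighborFinset a b).mp hb1)
    rw [Finset.sum_congr rfl this, Finset.sum_add_distrib, Finset.sum_const, nsmul_eq_mul, mul_one]
  have EC : ∀ b ∈ A, ∑ a ∈ G.neighborFinset b ∩ A, R a b
      = (∑ l ∈ G.neighborFinset b, nb b l j)
        - (if b = i then ((G.degree i : ℝ) - 1)⁻¹ * S else 0) := by
    intro b hb
    by_cases hbi : b = i
    · subst hbi
      rw [hNi, if_pos rfl]
      have hdne1 : ¬ G.degree b = 1 := by omega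
      have hcalc : ∀ a ∈ (G.neighborFinset b).erase j,
          R a b = ((G.degree b : ℝ) - 1)⁻¹
            * ((∑ l ∈ G.neighborFinset b, nb b l j) - nb b a j) := by
        intro a ha
        rw [hRdef]
        simp only [if_neg hdne1]
        rw [Finset.sdiff_singleton_eq_erase,
          Finset.sum_erase_eq_sub (Finset.mem_of_mem_erase ha)]
      rw [Finset.sum_congr rfl hcalc, ← Finset.mul_sum, Finset.sum_sub_distrib,
        Finset.sum_const, nsmul_eq_mul, ← hSdef,
        Finset.card_erase_of_mem ((G.mem_neighborFinset b j).mpr hij),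
        SimpleGraph.card_neighborFinset_eq_degree]
      have h1' : (1 : ℕ) ≤ G.degree b := by omega
      rw [Nat.cast_sub h1']
      push_cast
      field_simp
    · rw [hNsub b hb hbi, if_neg hbi, sub_zero]
      by_cases h1 : G.degree b = 1
      · obtain ⟨a₀, ha₀⟩ := Finset.card_eq_one.mp
          (show (G.neighborFinset b).card = 1 by
            rw [SimpleGraph.card_neighborFinset_eq_degree]; exact h1)
        rw [ha₀, Finset.sum_singleton, Finset.sum_singleton, hRdef]
        simp only [if_pos h1]
      · by_cases h0 : G.degree b = 0
        · have hne : G.neighborFinset b = ∅ := by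
            rw [← Finset.card_eq_zero, SimpleGraph.card_neighborFinset_eq_degree]; exact h0
          simp [hne]
        · have hb2 : 1 < G.degree b := by omega
          have hc : ((G.degree b : ℝ) - 1) ≠ 0 := by
            have : (2 : ℝ) ≤ (G.degree b : ℝ) := by exact_mod_cast hb2
            intro h; linarith
          have hcalc : ∀ a ∈ G.neighborFinset b,
              R a b = ((G.degree b : ℝ) - 1)⁻¹
                * ((∑ l ∈ G.neighborFinset b, nb b l j) - nb b a j) := by
            intro a ha
            rw [hRdef]
            simp only [if_neg h1]
            rw [Finset.sdiff_singleton_eq_erase, Finset.sum_erase_eq_sub ha]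
          rw [Finset.sum_congr rfl hcalc, ← Finset.mul_sum, Finset.sum_sub_distrib,
            Finset.sum_const, nsmul_eq_mul, SimpleGraph.card_neighborFinset_eq_degree]
          rw [show ((G.degree b : ℝ)) * (∑ l ∈ G.neighborFinset b, nb b l j)
              - (∑ l ∈ G.neighborFinset b, nb b l j)
              = ((G.degree b : ℝ) - 1) * (∑ l ∈ G.neighborFinset b, nb b l j) by ring]
          rw [inv_mul_cancel_left₀ hc]
  have ED : ∀ b ∈ A, ∑ l ∈ G.neighborFinset b, nb b l j
      = (∑ l ∈ G.neighborFinset b ∩ A, nb b l j) + (if b = i then 1 else 0) := by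
    intro b hb
    by_cases hbi : b = i
    · subst hbi
      rw [hNi, if_pos rfl, ← hnb1 b j ((G.mem_neighborFinset b j).mp ((G.mem_neighborFinset b j).mpr hij))]
      rw [Finset.sum_erase_add (G.neighborFinset b) _ ((G.mem_neighborFinset b j).mpr hij)]
    · rw [hNsub b hb hbi, if_neg hbi, add_zero]
  have e1 : ∑ b ∈ A, ∑ a ∈ G.neighborFinset b ∩ A, R a b
      = LHS + 1 - ((G.degree i : ℝ) - 1)⁻¹ * S := by
    calc ∑ b ∈ A, ∑ a ∈ G.neighborFinset b ∩ A, R a b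
        = ∑ b ∈ A, ((∑ l ∈ G.neighborFinset b, nb b l j)
            - (if b = i then ((G.degree i : ℝ) - 1)⁻¹ * S else 0)) := Finset.sum_congr rfl EC
      _ = (∑ b ∈ A, ∑ l ∈ G.neighborFinset b, nb b l j)
            - ((G.degree i : ℝ) - 1)⁻¹ * S := by
          rw [Finset.sum_sub_distrib,
            Finset.sum_ite_eq' A i (fun _ => ((G.degree i : ℝ) - 1)⁻¹ * S), if_pos hiA]
      _ = (∑ b ∈ A, ((∑ l ∈ G.neighborFinset b ∩ A, nb b l j) + (if b = i then 1 else 0)))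
            - ((G.degree i : ℝ) - 1)⁻¹ * S := by
          rw [Finset.sum_congr rfl ED]
      _ = LHS + 1 - ((G.degree i : ℝ) - 1)⁻¹ * S := by
          rw [Finset.sum_add_distrib, Finset.sum_ite_eq' A i (fun _ => (1:ℝ)), if_pos hiA,
            ← hLHSdef]
  have key : LHS = 2 * (compEdgeCount G' i : ℝ)
      + (LHS + 1 - ((G.degree i : ℝ) - 1)⁻¹ * S) := by
    conv_lhs => rw [EA]
    rw [hswap R, e1]
  have hS : S = ((G.degree i : ℝ) - 1) * (2 * (compEdgeCount G' i : ℝ) + 1) := by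
    have h : ((G.degree i : ℝ) - 1)⁻¹ * S = 2 * (compEdgeCount G' i : ℝ) + 1 := by linarith
    rw [(inv_mul_eq_iff_eq_mul₀ hd1).mp h]
  have hT : ∑ l ∈ G.neighborFinset i, nb i l j = S + 1 := by
    rw [hSdef, ← hnb1 i j hij]
    exact (Finset.sum_erase_add (G.neighborFinset i) _ ((G.mem_neighborFinset i j).mpr hij)).symm
  have goal1 : ((G.degree i : ℝ))⁻¹ * ∑ l ∈ G.neighborFinset i, nb i l j
      = 1 + 2 * (compEdgeCount G' i : ℝ) * ((G.degree i : ℝ) - 1) / (G.degree i : ℝ) := by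
    rw [hT, hS]
    field_simp
    ring
  have goal2 : ((G.degree i : ℝ))⁻¹ * ∑ l ∈ G.neighborFinset i, nb i l j
      ≤ 1 + 2 * (compEdgeCount G' i : ℝ) := by
    rw [goal1]
    have hm0 : (0:ℝ) ≤ (compEdgeCount G' i : ℝ) := Nat.cast_nonneg _
    have keyle : 2 * (compEdgeCount G' i : ℝ) * ((G.degree i : ℝ) - 1) / (G.degree i : ℝ)
        ≤ 2 * (compEdgeCount G' i : ℝ) := by
      rw [div_le_iff₀ hdpos]
      nlinarith
    linarith
  exact ⟨goal1, goal2, part3⟩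
end
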